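/- arXiv:2501.10076 — 3 statements merged into one kernel-verified Lean document; each statement's English description precedes it below -/
import Mathlib

section
/- For all integers 2 ≤ k ≤ n and k ≤ j ≤ i ≤ n, the entries of the matrix after k−1 steps of Neville elimination of the Bessel coefficient matrix A are a^{(k)}_{ij} = (1/2^{j-1}) · (i+j-k-1)!/((i-j)!(j-k)!) · ∏_{r=1}^{k-1} (2i-r-1)/(i-k+r). -/
/-- Entries of the lower triangular Bessel coefficient matrix. -/
noncomputable def besselA (i j : ℕ) : ℝ :=
  if j ≤ i then ((i + j - 2).factorial : ℝ) / (2 ^ (j - 1) * (i - j).factorial * (j - 1).factorial)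
  else 0

/-- `besselNE k i j` is the `(i,j)` entry of `A^{(k+1)}`, the matrix obtained after `k`
steps of Neville elimination of the Bessel coefficient matrix (no row exchanges needed). -/
noncomputable def besselNE : ℕ → ℕ → ℕ → ℝ
  | 0, i, j => besselA i j
  | k + 1, i, j =>
      if k + 1 ≤ j ∧ j < i then
        besselNE k i j - besselNE k i (k + 1) / besselNE k (i - 1) (k + 1) * besselNE k (i - 1) j
      else besselNE k i j

lemma fact_add (a b : ℕ) : (((a+b).factorial : ℕ) : ℝ)
    = (a.factorial : ℝ) * ∏ r ∈ Finset.Icc 1 b, ((a + r : ℕ) : ℝ) := by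
  induction b with
  | zero => simp
  | succ b ih =>
      rw [Finset.prod_Icc_succ_top (by omega : 1 ≤ b+1)]
      have h : (((a+(b+1)).factorial : ℕ) : ℝ) = (((a+b)+1 : ℕ) : ℝ) * ((a+b).factorial : ℝ) := by
        rw [show a+(b+1) = (a+b)+1 from rfl, Nat.factorial_succ]; push_cast; ring
      rw [h, ih]
      push_cast
      ring

noncomputable def Gf (k i j : ℕ) : ℝ :=
  ((i+j-k-1).factorial * (2*i-2).factorial * (i-k).factorial) /
  (2^(j-1) * (i-j).factorial * (j-k).factorial * (2*i-k-1).factorial * (i-1).factorial)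

lemma prodEq (k i : ℕ) (hk : 1 ≤ k) (hki : k ≤ i) :
    ∏ r ∈ Finset.Icc 1 (k-1), ((2*i - r - 1 : ℕ):ℝ)/((i - k + r : ℕ):ℝ)
    = ((2*i-2).factorial * (i-k).factorial) / (((2*i-k-1).factorial : ℕ) * (i-1).factorial) := by
  have hfk : ((i-k).factorial : ℝ) ≠ 0 := by positivity
  have hf1 : (((2*i-k-1).factorial : ℕ) : ℝ) ≠ 0 := by positivity
  have hden : ∏ r ∈ Finset.Icc 1 (k-1), ((i - k + r : ℕ):ℝ)
      = ((i-1).factorial : ℝ) / ((i-k).factorial : ℝ) := by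
    have h := fact_add (i-k) (k-1)
    rw [show i-k+(k-1) = i-1 from by omega] at h
    rw [eq_div_iff hfk, mul_comm]
    exact h.symm
  have hnum : ∏ r ∈ Finset.Icc 1 (k-1), ((2*i - r - 1 : ℕ):ℝ)
      = ((2*i-2).factorial : ℝ) / ((2*i-k-1).factorial : ℝ) := by
    have hre : ∏ r ∈ Finset.Icc 1 (k-1), ((2*i - r - 1 : ℕ):ℝ)
        = ∏ r ∈ Finset.Icc 1 (k-1), ((2*i - k - 1 + r : ℕ):ℝ) := by
      apply Finset.prod_nbij' (fun r => k - r) (fun r => k - r)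
      · intro a ha; simp [Finset.mem_Icc] at ha ⊢; omega
      · intro a ha; simp [Finset.mem_Icc] at ha ⊢; omega
      · intro a ha; simp [Finset.mem_Icc] at ha; omega
      · intro a ha; simp [Finset.mem_Icc] at ha; omega
      · intro a ha; simp [Finset.mem_Icc] at ha
        congr 1; omega
    have h := fact_add (2*i-k-1) (k-1)
    rw [show 2*i-k-1+(k-1) = 2*i-2 from by omega] at h
    rw [hre, eq_div_iff hf1, mul_comm]
    exact h.symm
  rw [Finset.prod_div_distrib, hnum, hden]
  have hfi1 : ((i-1).factorial : ℝ) ≠ 0 := by positivity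
  field_simp

lemma Gf_eval (k i j a d e g h p q w : ℕ) (h1 : i+j-k-1 = a) (h2 : 2*i-2 = d)
    (h3 : i-k = e) (h4 : j-1 = g) (h5 : i-j = h) (h6 : j-k = p) (h7 : 2*i-k-1 = q)
    (h8 : i-1 = w) :
    Gf k i j = ((a.factorial : ℝ) * d.factorial * e.factorial) /
      (2^g * h.factorial * p.factorial * q.factorial * w.factorial) := by
  unfold Gf; rw [h1, h2, h3, h4, h5, h6, h7, h8]

lemma diag_id (m d : ℕ) : Gf (m+2) (m+2+d) (m+2+d) = Gf (m+1) (m+2+d) (m+2+d) := by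
  rw [Gf_eval (m+2) (m+2+d) (m+2+d) (m+2*d+1) (2*m+2*d+2) d (m+d+1) 0 d (m+2*d+1) (m+d+1)
      (by omega) (by omega) (by omega) (by omega) (by omega) (by omega) (by omega) (by omega),
    Gf_eval (m+1) (m+2+d) (m+2+d) (m+2*d+2) (2*m+2*d+2) (d+1) (m+d+1) 0 (d+1) (m+2*d+2) (m+d+1)
      (by omega) (by omega) (by omega) (by omega) (by omega) (by omega) (by omega) (by omega)]
  have n1 : ((m+2*d+1).factorial : ℝ) ≠ 0 := by positivity
  have n2 : ((m+2*d+2).factorial : ℝ) ≠ 0 := by positivity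
  have n3 : ((d).factorial : ℝ) ≠ 0 := by positivity
  have n4 : ((d+1).factorial : ℝ) ≠ 0 := by positivity
  field_simp

set_option maxHeartbeats 1000000 in
lemma step_id (m b c : ℕ) :
    Gf (m+2) (m+3+b+c) (m+2+b) = Gf (m+1) (m+3+b+c) (m+2+b)
      - Gf (m+1) (m+3+b+c) (m+1) / Gf (m+1) (m+2+b+c) (m+1) * Gf (m+1) (m+2+b+c) (m+2+b) := by
  rw [Gf_eval (m+2) (m+3+b+c) (m+2+b) (m+2*b+c+2) (2*m+2*b+2*c+4) (b+c+1) (m+b+1) (c+1) b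
      (m+2*b+2*c+3) (m+b+c+2) (by omega) (by omega) (by omega) (by omega) (by omega) (by omega)
      (by omega) (by omega),
    Gf_eval (m+1) (m+3+b+c) (m+2+b) (m+2*b+c+3) (2*m+2*b+2*c+4) (b+c+2) (m+b+1) (c+1) (b+1)
      (m+2*b+2*c+4) (m+b+c+2) (by omega) (by omega) (by omega) (by omega) (by omega) (by omega)
      (by omega) (by omega),
    Gf_eval (m+1) (m+3+b+c) (m+1) (m+b+c+2) (2*m+2*b+2*c+4) (b+c+2) m (b+c+2) 0
      (m+2*b+2*c+4) (m+b+c+2) (by omega) (by omega) (by omega) (by omega) (by omega) (by omega)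
      (by omega) (by omega),
    Gf_eval (m+1) (m+2+b+c) (m+1) (m+b+c+1) (2*m+2*b+2*c+2) (b+c+1) m (b+c+1) 0
      (m+2*b+2*c+2) (m+b+c+1) (by omega) (by omega) (by omega) (by omega) (by omega) (by omega)
      (by omega) (by omega),
    Gf_eval (m+1) (m+2+b+c) (m+2+b) (m+2*b+c+2) (2*m+2*b+2*c+2) (b+c+1) (m+b+1) c (b+1)
      (m+2*b+2*c+2) (m+b+c+1) (by omega) (by omega) (by omega) (by omega) (by omega) (by omega)
      (by omega) (by omega)]
  -- common factor
  set X : ℝ := (((m+2*b+c+2).factorial : ℝ) * ((2*m+2*b+2*c+4).factorial : ℝ)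
      * ((b+c+1).factorial : ℝ)) /
    (2^(m+b+1) * ((c+1).factorial : ℝ) * ((b).factorial : ℝ) * ((m+2*b+2*c+4).factorial : ℝ)
      * ((m+b+c+1).factorial : ℝ) * ((b+1 : ℕ) : ℝ) * ((m+b+c+2 : ℕ) : ℝ)) with hX
  have n1 : ((m+2*b+c+2).factorial : ℝ) ≠ 0 := by positivity
  have n2 : ((2*m+2*b+2*c+4).factorial : ℝ) ≠ 0 := by positivity
  have n2' : ((2*m+2*b+2*c+2).factorial : ℝ) ≠ 0 := by positivity
  have n3 : ((b+c+1).factorial : ℝ) ≠ 0 := by positivity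
  have n4 : ((c).factorial : ℝ) ≠ 0 := by positivity
  have n4' : ((c+1).factorial : ℝ) ≠ 0 := by positivity
  have n5 : ((b).factorial : ℝ) ≠ 0 := by positivity
  have n5' : ((b+1).factorial : ℝ) ≠ 0 := by positivity
  have n6 : ((m+2*b+2*c+4).factorial : ℝ) ≠ 0 := by positivity
  have n6' : ((m+2*b+2*c+3).factorial : ℝ) ≠ 0 := by positivity
  have n6'' : ((m+2*b+2*c+2).factorial : ℝ) ≠ 0 := by positivity
  have n7 : ((m+b+c+1).factorial : ℝ) ≠ 0 := by positivity
  have n7' : ((m+b+c+2).factorial : ℝ) ≠ 0 := by positivity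
  have n8 : (2:ℝ)^(m+b+1) ≠ 0 := by positivity
  have n8' : (2:ℝ)^m ≠ 0 := by positivity
  have nb1 : ((b+1 : ℕ) : ℝ) ≠ 0 := by positivity
  have nc1 : ((m+b+c+2 : ℕ) : ℝ) ≠ 0 := by positivity
  have nc2 : ((m+2*b+c+3 : ℕ) : ℝ) ≠ 0 := by positivity
  have nc3 : ((b+c+2 : ℕ) : ℝ) ≠ 0 := by positivity
  have nc4 : ((m+2*b+2*c+4 : ℕ) : ℝ) ≠ 0 := by positivity
  have nc5 : ((c+1 : ℕ) : ℝ) ≠ 0 := by positivity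
  -- successor expansions (as real equalities)
  have e1 : ((m+2*b+c+3).factorial : ℝ) = ((m+2*b+c+3 : ℕ):ℝ) * ((m+2*b+c+2).factorial : ℝ) := by
    rw [show m+2*b+c+3 = (m+2*b+c+2)+1 from by omega, Nat.factorial_succ]; push_cast; ring
  have e2 : ((b+c+2).factorial : ℝ) = ((b+c+2 : ℕ):ℝ) * ((b+c+1).factorial : ℝ) := by
    rw [show b+c+2 = (b+c+1)+1 from by omega, Nat.factorial_succ]; push_cast; ring
  have e3 : ((b+1).factorial : ℝ) = ((b+1 : ℕ):ℝ) * ((b).factorial : ℝ) := by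
    rw [Nat.factorial_succ]; push_cast; ring
  have e4 : ((m+b+c+2).factorial : ℝ) = ((m+b+c+2 : ℕ):ℝ) * ((m+b+c+1).factorial : ℝ) := by
    rw [show m+b+c+2 = (m+b+c+1)+1 from by omega, Nat.factorial_succ]; push_cast; ring
  have e5 : ((m+2*b+2*c+4).factorial : ℝ)
      = ((m+2*b+2*c+4 : ℕ):ℝ) * ((m+2*b+2*c+3).factorial : ℝ) := by
    rw [show m+2*b+2*c+4 = (m+2*b+2*c+3)+1 from by omega, Nat.factorial_succ]; push_cast; ring
  have e6 : ((c+1).factorial : ℝ) = ((c+1 : ℕ):ℝ) * ((c).factorial : ℝ) := by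
    rw [Nat.factorial_succ]; push_cast; ring
  have h1 : (((m+2*b+c+2).factorial : ℝ) * ((2*m+2*b+2*c+4).factorial) * ((b+c+1).factorial)) /
      (2^(m+b+1) * ((c+1).factorial) * ((b).factorial) * ((m+2*b+2*c+3).factorial)
        * ((m+b+c+2).factorial))
      = (((b+1 : ℕ):ℝ) * ((m+2*b+2*c+4 : ℕ):ℝ)) * X := by
    rw [hX, e4]
    rw [e5]
    field_simp
  have h2 : (((m+2*b+c+3).factorial : ℝ) * ((2*m+2*b+2*c+4).factorial) * ((b+c+2).factorial)) /
      (2^(m+b+1) * ((c+1).factorial) * ((b+1).factorial) * ((m+2*b+2*c+4).factorial)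
        * ((m+b+c+2).factorial))
      = (((m+2*b+c+3 : ℕ):ℝ) * ((b+c+2 : ℕ):ℝ)) * X := by
    rw [hX, e1, e2, e3, e4]
    field_simp
  have h3 : (((m+b+c+2).factorial : ℝ) * ((2*m+2*b+2*c+4).factorial) * ((b+c+2).factorial)) /
        (2^m * ((b+c+2).factorial) * (Nat.factorial 0) * ((m+2*b+2*c+4).factorial)
          * ((m+b+c+2).factorial)) /
      ((((m+b+c+1).factorial : ℝ) * ((2*m+2*b+2*c+2).factorial) * ((b+c+1).factorial)) /
        (2^m * ((b+c+1).factorial) * (Nat.factorial 0) * ((m+2*b+2*c+2).factorial)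
          * ((m+b+c+1).factorial))) *
      ((((m+2*b+c+2).factorial : ℝ) * ((2*m+2*b+2*c+2).factorial) * ((b+c+1).factorial)) /
        (2^(m+b+1) * ((c).factorial) * ((b+1).factorial) * ((m+2*b+2*c+2).factorial)
          * ((m+b+c+1).factorial)))
      = (((c+1 : ℕ):ℝ) * ((m+b+c+2 : ℕ):ℝ)) * X := by
    rw [hX, e3, e6]
    rw [Nat.factorial_zero]
    field_simp
  rw [h1]
  rw [h2]
  rw [h3]
  have hc : ((b+1 : ℕ):ℝ) * ((m+2*b+2*c+4 : ℕ):ℝ)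
      = ((m+2*b+c+3 : ℕ):ℝ) * ((b+c+2 : ℕ):ℝ) - ((c+1 : ℕ):ℝ) * ((m+b+c+2 : ℕ):ℝ) := by
    push_cast; ring
  rw [hc]; ring

lemma besselNE_eq (m : ℕ) : ∀ i j : ℕ, m + 1 ≤ j → j ≤ i → besselNE m i j = Gf (m+1) i j := by
  induction m with
  | zero =>
      intro i j h1 h2
      simp only [besselNE, besselA, if_pos h2]
      unfold Gf
      rw [show i+j-1-1 = i+j-2 from by omega, show 2*i-1-1 = 2*i-2 from by omega]
      have f1 : ((2*i-2).factorial:ℝ) ≠ 0 := by positivity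
      have f2 : ((i-1).factorial:ℝ) ≠ 0 := by positivity
      have f3 : ((i-j).factorial:ℝ) ≠ 0 := by positivity
      have f4 : ((j-1).factorial:ℝ) ≠ 0 := by positivity
      have f5 : (2:ℝ)^(j-1) ≠ 0 := by positivity
      have f6 : ((i+j-2).factorial:ℝ) ≠ 0 := by positivity
      field_simp
  | succ m ih =>
      intro i j h1 h2
      rcases eq_or_lt_of_le h2 with rfl | hlt
      · simp only [besselNE, if_neg (by omega : ¬(m+1 ≤ j ∧ j < j))]
        rw [ih j j (by omega) le_rfl]
        obtain ⟨d, rfl⟩ : ∃ d, j = m+2+d := ⟨j-(m+2), by omega⟩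
        rw [show m+1+1 = m+2 from rfl]
        exact (diag_id m d).symm
      · simp only [besselNE]
        rw [if_pos (show m+1 ≤ j ∧ j < i from ⟨by omega, hlt⟩)]
        rw [ih i j (by omega) (le_of_lt hlt), ih i (m+1) le_rfl (by omega),
            ih (i-1) (m+1) le_rfl (by omega), ih (i-1) j (by omega) (by omega)]
        obtain ⟨b, rfl⟩ : ∃ b, j = m+2+b := ⟨j-(m+2), by omega⟩
        obtain ⟨c, rfl⟩ : ∃ c, i = m+3+b+c := ⟨i-(m+3+b), by omega⟩
        rw [show m+3+b+c-1 = m+2+b+c from by omega, show m+1+1 = m+2 from rfl]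
        exact (step_id m b c).symm

theorem bessel_NE_entries (n k i j : ℕ) (hk : 2 ≤ k) (hkj : k ≤ j) (hji : j ≤ i) (hin : i ≤ n) :
    besselNE (k - 1) i j
      = (1 / 2 ^ (j - 1)) * ((i + j - k - 1).factorial : ℝ)
          / ((i - j).factorial * (j - k).factorial)
        * ∏ r ∈ Finset.Icc 1 (k - 1), ((2 * i - r - 1 : ℕ) : ℝ) / ((i - k + r : ℕ) : ℝ) := by
  have h := besselNE_eq (k-1) i j (by omega) hji
  rw [show k-1+1 = k from by omega] at h
  rw [h, prodEq k i (by omega) (le_trans hkj hji)]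
  unfold Gf
  have f1 : ((2*i-2).factorial:ℝ) ≠ 0 := by positivity
  have f2 : ((i-1).factorial:ℝ) ≠ 0 := by positivity
  have f3 : ((i-j).factorial:ℝ) ≠ 0 := by positivity
  have f4 : ((j-k).factorial:ℝ) ≠ 0 := by positivity
  have f5 : (2:ℝ)^(j-1) ≠ 0 := by positivity
  have f6 : ((i+j-k-1).factorial:ℝ) ≠ 0 := by positivity
  have f7 : ((2*i-k-1).factorial:ℝ) ≠ 0 := by positivity
  have f8 : ((i-k).factorial:ℝ) ≠ 0 := by positivity
  field_simp
end

section
/- The pivots of the Neville elimination of the Bessel coefficient matrix A are p_{ij} = (1/2^{j-1}) · (i-1)!/(i-j)! · ∏_{r=1}^{j-1} (2i-r-1)/(i-j+r) for 1 ≤ j ≤ i ≤ n, and in particular all pivots are positive. -/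
private lemma fpos (n : ℕ) : (0:ℝ) < n.factorial := by exact_mod_cast n.factorial_pos

private lemma fne (n : ℕ) : ((n.factorial : ℝ)) ≠ 0 := ne_of_gt (fpos n)

set_option maxHeartbeats 1000000 in
/-- Closed form for the Neville elimination entries of the Bessel matrix. -/
private lemma bessel_key : ∀ k i j : ℕ, k < j → j ≤ i →
    besselNE k i j =
      ((2*i-2).factorial : ℝ) * ((i+j-k-2).factorial : ℝ) * ((i-k-1).factorial : ℝ) /
        ((2:ℝ)^(j-1) * ((i-j).factorial : ℝ) * ((2*i-k-2).factorial : ℝ)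
          * ((j-k-1).factorial : ℝ) * ((i-1).factorial : ℝ)) := by
  intro k
  induction k with
  | zero =>
    intro i j hkj hji
    simp only [besselNE, besselA, if_pos hji, Nat.sub_zero]
    rw [div_eq_div_iff (by positivity) (by positivity)]
    ring
  | succ k ih =>
    intro i j hkj hji
    simp only [besselNE]
    by_cases hij : j < i
    · rw [if_pos ⟨by omega, hij⟩]
      obtain ⟨a, ha⟩ : ∃ a, j = k + 2 + a := ⟨j - k - 2, by omega⟩
      obtain ⟨b, hb⟩ : ∃ b, i = k + 3 + a + b := ⟨i - j - 1, by omega⟩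
      rw [ih i j (by omega) (by omega), ih i (k+1) (by omega) (by omega),
          ih (i-1) (k+1) (by omega) (by omega), ih (i-1) j (by omega) (by omega)]
      rw [show i - 1 = k+a+b+2 by omega]
      rw [show 2*i-2 = 2*k+2*a+2*b+4 by omega,
          show i+j-(k+1)-2 = k+2*a+b+2 by omega,
          show i-(k+1)-1 = a+b+1 by omega,
          show j-1 = k+a+1 by omega,
          show i-j = b+1 by omega,
          show 2*i-(k+1)-2 = k+2*a+2*b+3 by omega,
          show j-(k+1)-1 = a by omega,
          show i+j-k-2 = k+2*a+b+3 by omega,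
          show i-k-1 = a+b+2 by omega,
          show 2*i-k-2 = k+2*a+2*b+4 by omega,
          show j-k-1 = a+1 by omega,
          show i+(k+1)-k-2 = k+a+b+2 by omega,
          show (k+1)-1 = k by omega,
          show i-(k+1) = a+b+2 by omega,
          show (k+1)-k-1 = 0 by omega,
          show 2*(k+a+b+2)-2 = 2*k+2*a+2*b+2 by omega,
          show (k+a+b+2)+(k+1)-k-2 = k+a+b+1 by omega,
          show (k+a+b+2)-k-1 = a+b+1 by omega,
          show (k+a+b+2)-(k+1) = a+b+1 by omega,
          show 2*(k+a+b+2)-k-2 = k+2*a+2*b+2 by omega,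
          show (k+a+b+2)-1 = k+a+b+1 by omega,
          show (k+a+b+2)+j-k-2 = k+2*a+b+2 by omega,
          show (k+a+b+2)-j = b by omega]
      have F1 : ((2*k+2*a+2*b+4).factorial : ℝ)
          = (2*(k:ℝ)+2*a+2*b+4) * ((2*(k:ℝ)+2*a+2*b+3) * ((2*k+2*a+2*b+2).factorial : ℝ)) := by
        rw [show 2*k+2*a+2*b+4 = (2*k+2*a+2*b+2)+1+1 by omega, Nat.factorial_succ,
            Nat.factorial_succ]
        push_cast; ring
      have F2 : ((k+2*a+2*b+4).factorial : ℝ)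
          = ((k:ℝ)+2*a+2*b+4) * (((k:ℝ)+2*a+2*b+3) * ((k+2*a+2*b+2).factorial : ℝ)) := by
        rw [show k+2*a+2*b+4 = (k+2*a+2*b+2)+1+1 by omega, Nat.factorial_succ,
            Nat.factorial_succ]
        push_cast; ring
      have F3 : ((k+2*a+2*b+3).factorial : ℝ)
          = ((k:ℝ)+2*a+2*b+3) * ((k+2*a+2*b+2).factorial : ℝ) := by
        rw [show k+2*a+2*b+3 = (k+2*a+2*b+2)+1 by omega, Nat.factorial_succ]
        push_cast; ring
      have F4 : ((k+2*a+b+3).factorial : ℝ)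
          = ((k:ℝ)+2*a+b+3) * ((k+2*a+b+2).factorial : ℝ) := by
        rw [show k+2*a+b+3 = (k+2*a+b+2)+1 by omega, Nat.factorial_succ]
        push_cast; ring
      have F5 : ((a+b+2).factorial : ℝ) = ((a:ℝ)+b+2) * ((a+b+1).factorial : ℝ) := by
        rw [show a+b+2 = (a+b+1)+1 by omega, Nat.factorial_succ]
        push_cast; ring
      have F6 : ((a+1).factorial : ℝ) = ((a:ℝ)+1) * (a.factorial : ℝ) := by
        rw [Nat.factorial_succ]; push_cast; ring
      have F7 : ((b+1).factorial : ℝ) = ((b:ℝ)+1) * (b.factorial : ℝ) := by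
        rw [Nat.factorial_succ]; push_cast; ring
      have F8 : ((k+a+b+2).factorial : ℝ)
          = ((k:ℝ)+a+b+2) * ((k+a+b+1).factorial : ℝ) := by
        rw [show k+a+b+2 = (k+a+b+1)+1 by omega, Nat.factorial_succ]
        push_cast; ring
      rw [F1, F2, F3, F4, F5, F6, F7, F8, Nat.factorial_zero]
      have n1 := fne (2*k+2*a+2*b+2)
      have n2 := fne (k+2*a+2*b+2)
      have n3 := fne (k+2*a+b+2)
      have n4 := fne (a+b+1)
      have n5 := fne a
      have n6 := fne b
      have n7 := fne (k+a+b+1)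
      have n8 := fne (k+a+1)
      have c1 : (2*(k:ℝ)+2*a+2*b+4) ≠ 0 := by positivity
      have c2 : (2*(k:ℝ)+2*a+2*b+3) ≠ 0 := by positivity
      have c3 : ((k:ℝ)+2*a+2*b+4) ≠ 0 := by positivity
      have c4 : ((k:ℝ)+2*a+2*b+3) ≠ 0 := by positivity
      have c5 : ((k:ℝ)+2*a+b+3) ≠ 0 := by positivity
      have c6 : ((a:ℝ)+b+2) ≠ 0 := by positivity
      have c7 : ((a:ℝ)+1) ≠ 0 := by positivity
      have c8 : ((b:ℝ)+1) ≠ 0 := by positivity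
      have c9 : ((k:ℝ)+a+b+2) ≠ 0 := by positivity
      have c10 : ((2:ℝ)^(k+a+1)) ≠ 0 := by positivity
      have c11 : ((2:ℝ)^k) ≠ 0 := by positivity
      field_simp
      ring
    · rw [if_neg (by omega)]
      have hji' : j = i := by omega
      subst hji'
      rw [ih j j (by omega) le_rfl]
      rw [show j+j-k-2 = 2*j-k-2 by omega, show j+j-(k+1)-2 = 2*j-(k+1)-2 by omega,
          Nat.sub_self]
      rw [div_eq_div_iff (by positivity) (by positivity)]
      ring

private lemma bessel_prod_aux (i j : ℕ) (hj : 1 ≤ j) (hji : j ≤ i) : ∀ m, m ≤ j - 1 →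
    ∏ r ∈ Finset.Icc 1 m, ((2*i-r-1 : ℕ) : ℝ) / ((i-j+r : ℕ) : ℝ)
      = ((2*i-2).factorial * (i-j).factorial : ℝ)
        / (((2*i-m-2).factorial : ℝ) * ((i-j+m).factorial : ℝ)) := by
  intro m
  induction m with
  | zero =>
    intro _
    simp only [Nat.sub_zero, Nat.add_zero]
    rw [Finset.Icc_eq_empty (by omega), Finset.prod_empty]
    rw [eq_comm, div_eq_one_iff_eq (by positivity)]
  | succ m ihm =>
    intro hm
    rw [Finset.prod_Icc_succ_top (by omega : 1 ≤ m+1), ihm (by omega)]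
    rw [show 2*i-(m+1)-1 = (2*i-m-3)+1 by omega,
        show i-j+(m+1) = (i-j+m)+1 by omega,
        show 2*i-(m+1)-2 = 2*i-m-3 by omega,
        show 2*i-m-2 = (2*i-m-3)+1 by omega,
        Nat.factorial_succ ((i-j+m)), Nat.factorial_succ (2*i-m-3)]
    rw [div_mul_div_comm, div_eq_div_iff (by positivity) (by positivity)]
    push_cast
    ring

theorem bessel_NE_pivots (n i j : ℕ) (hj : 1 ≤ j) (hji : j ≤ i) (hin : i ≤ n) :
    besselNE (j - 1) i j
        = (1 / 2 ^ (j - 1)) * ((i - 1).factorial : ℝ) / ((i - j).factorial : ℝ)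
          * ∏ r ∈ Finset.Icc 1 (j - 1), ((2 * i - r - 1 : ℕ) : ℝ) / ((i - j + r : ℕ) : ℝ)
      ∧ 0 < besselNE (j - 1) i j := by
  have key := bessel_key (j-1) i j (by omega) hji
  rw [show i+j-(j-1)-2 = i-1 by omega, show i-(j-1)-1 = i-j by omega,
      show 2*i-(j-1)-2 = 2*i-j-1 by omega, show j-(j-1)-1 = 0 by omega,
      Nat.factorial_zero] at key
  have hclosed : besselNE (j-1) i j
      = ((2*i-2).factorial : ℝ) / ((2:ℝ)^(j-1) * ((2*i-j-1).factorial : ℝ)) := by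
    rw [key, div_eq_div_iff (by positivity) (by positivity)]
    ring
  have hprod := bessel_prod_aux i j hj hji (j-1) le_rfl
  rw [show 2*i-(j-1)-2 = 2*i-j-1 by omega, show i-j+(j-1) = i-1 by omega] at hprod
  constructor
  · rw [hclosed, hprod]
    have h2 : ((2:ℝ)^(j-1)) ≠ 0 := by positivity
    have hfi := fne (i-1)
    have hfj := fne (i-j)
    have hfw := fne (2*i-j-1)
    field_simp
  · rw [hclosed]
    positivity
end

section
/- The lower triangular matrix A with entries a_{ij} = (i+j-2)!/(2^{j-1}(i-j)!(j-1)!) for i ≥ j (and 0 for i < j) is a nonsingular totally positive matrix: all its minors are nonnegative and its determinant is positive. -/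
open Matrix Finset

/-- All minors are nonnegative. -/
def IsTP {n : ℕ} (M : Matrix (Fin n) (Fin n) ℝ) : Prop :=
  ∀ (k : ℕ) (r c : Fin k → Fin n), StrictMono r → StrictMono c →
    0 ≤ (M.submatrix r c).det

/-- Adding a multiple... here: adding the previous row to a row preserves TP. -/
lemma isTP_rowop {n : ℕ} {M : Matrix (Fin n) (Fin n) ℝ} (hM : IsTP M)
    (p q : Fin n) (hpq : (q : ℕ) + 1 = (p : ℕ)) :
    IsTP (M.updateRow p (M p + M q)) := by
  intro k r c hr hc
  by_cases hp : ∃ i0, r i0 = p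
  · obtain ⟨i0, hi0⟩ := hp
    have hqp : q ≠ p := by
      intro h; rw [h] at hpq; omega
    have hsub : (M.updateRow p (M p + M q)).submatrix r c
        = (M.submatrix r c).updateRow i0
            ((fun j => M p (c j)) + (fun j => M q (c j))) := by
      ext i j
      by_cases h : i = i0
      · subst h
        simp [hi0, Matrix.submatrix_apply, Matrix.updateRow_self]
      · have hne : r i ≠ p := fun hh => h (hr.injective (hh.trans hi0.symm))
        simp [Matrix.submatrix_apply, Matrix.updateRow_ne hne, Matrix.updateRow_ne h]
    rw [hsub, Matrix.det_updateRow_add]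
    have e1 : (M.submatrix r c).updateRow i0 (fun j => M p (c j)) = M.submatrix r c := by
      have : (fun j => M p (c j)) = (M.submatrix r c) i0 := by
        funext j; simp [Matrix.submatrix_apply, hi0]
      rw [this, Matrix.updateRow_eq_self]
    rw [e1]
    have h2 : 0 ≤ ((M.submatrix r c).updateRow i0 (fun j => M q (c j))).det := by
      by_cases hq : ∃ i1, r i1 = q
      · obtain ⟨i1, hi1⟩ := hq
        have hne : i0 ≠ i1 := by
          intro h; rw [h, hi1] at hi0; exact hqp hi0
        have hrows : ((M.submatrix r c).updateRow i0 (fun j => M q (c j))) i0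
            = ((M.submatrix r c).updateRow i0 (fun j => M q (c j))) i1 := by
          rw [Matrix.updateRow_self, Matrix.updateRow_ne (Ne.symm hne)]
          funext j; simp [Matrix.submatrix_apply, hi1]
        rw [Matrix.det_zero_of_row_eq hne hrows]
      · push_neg at hq
        have hsub2 : ((M.submatrix r c).updateRow i0 (fun j => M q (c j)))
            = M.submatrix (Function.update r i0 q) c := by
          ext i j
          by_cases h : i = i0
          · subst h
            simp [Matrix.updateRow_self, Matrix.submatrix_apply, Function.update_self]
          · simp [Matrix.updateRow_ne h, Matrix.submatrix_apply, Function.update_of_ne h]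
        rw [hsub2]
        apply hM
        · intro a b hab
          have hupd : ∀ x, ((Function.update r i0 q x : Fin n) : ℕ)
              = if x = i0 then (q : ℕ) else (r x : ℕ) := by
            intro x
            by_cases hx : x = i0
            · subst hx; rw [Function.update_self, if_pos rfl]
            · rw [Function.update_of_ne hx, if_neg hx]
          rw [Fin.lt_def, hupd a, hupd b]
          by_cases ha : a = i0 <;> by_cases hb : b = i0
          · exact absurd (ha.trans hb.symm) (ne_of_lt hab)
          · rw [if_pos ha, if_neg hb]
            have h1 : r i0 < r b := hr (ha ▸ hab)
            rw [hi0, Fin.lt_def] at h1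
            omega
          · rw [if_neg ha, if_pos hb]
            have h1 : r a < r i0 := hr (hb ▸ hab)
            rw [hi0, Fin.lt_def] at h1
            have h2 : (r a : ℕ) ≠ (q : ℕ) := fun hh => hq a (Fin.ext hh)
            omega
          · rw [if_neg ha, if_neg hb]
            exact hr hab
        · exact hc
    linarith [hM k r c hr hc]
  · push_neg at hp
    have : (M.updateRow p (M p + M q)).submatrix r c = M.submatrix r c := by
      ext i j
      simp [Matrix.submatrix_apply, Matrix.updateRow_ne (hp i)]
    rw [this]; exact hM k r c hr hc

/-- Prefix-sum of rows. -/
noncomputable def sumRows {n : ℕ} (X : Matrix (Fin n) (Fin n) ℝ) : Matrix (Fin n) (Fin n) ℝ :=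
  Matrix.of fun i j => ∑ s : Fin n, if (s : ℕ) ≤ (i : ℕ) then X s j else 0

/-- Partial prefix-sum: rows with index ≤ t are prefix-summed. -/
noncomputable def partSum {n : ℕ} (X : Matrix (Fin n) (Fin n) ℝ) (t : ℕ) :
    Matrix (Fin n) (Fin n) ℝ :=
  Matrix.of fun i j =>
    if (i : ℕ) ≤ t then ∑ s : Fin n, (if (s : ℕ) ≤ (i : ℕ) then X s j else 0) else X i j

lemma partSum_zero {n : ℕ} (X : Matrix (Fin n) (Fin n) ℝ) : partSum X 0 = X := by
  ext i j
  simp only [partSum, Matrix.of_apply]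
  by_cases hi : (i : ℕ) ≤ 0
  · rw [if_pos hi]
    have key : ∀ s : Fin n, (if (s : ℕ) ≤ (i : ℕ) then X s j else 0)
        = (if s = i then X s j else 0) := by
      intro s
      refine if_congr ?_ rfl rfl
      rw [Fin.ext_iff]; omega
    rw [Finset.sum_congr rfl (fun s _ => key s)]
    simp
  · rw [if_neg hi]

lemma isTP_partSum {n : ℕ} {X : Matrix (Fin n) (Fin n) ℝ} (hX : IsTP X) :
    ∀ t, IsTP (partSum X t) := by
  intro t
  induction t with
  | zero => rw [partSum_zero]; exact hX
  | succ t ih =>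
    by_cases h : t + 1 < n
    · have key : partSum X (t + 1)
          = (partSum X t).updateRow ⟨t+1, h⟩
              ((partSum X t) ⟨t+1, h⟩ + (partSum X t) ⟨t, by omega⟩) := by
        ext i j
        by_cases hi : i = ⟨t+1, h⟩
        · subst hi
          rw [Matrix.updateRow_self]
          simp only [partSum, Matrix.of_apply, Pi.add_apply]
          rw [if_pos (by simp), if_neg (by simp), if_pos (by simp)]
          have key2 : ∀ s : Fin n, (if (s : ℕ) ≤ t + 1 then X s j else 0)
              = (if s = (⟨t+1, h⟩ : Fin n) then X s j else 0)
                + (if (s : ℕ) ≤ t then X s j else 0) := by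
            intro s
            by_cases h1 : (s : ℕ) ≤ t
            · rw [if_pos (by omega), if_neg (by rw [Fin.ext_iff]; simp; omega), if_pos h1,
                zero_add]
            · by_cases h2 : (s : ℕ) = t + 1
              · rw [if_pos (by omega), if_pos (by rw [Fin.ext_iff]; simpa using h2),
                  if_neg h1, add_zero]
              · rw [if_neg (by omega), if_neg (by rw [Fin.ext_iff]; simp; omega), if_neg h1,
                  add_zero]
          rw [Finset.sum_congr rfl (fun s _ => key2 s), Finset.sum_add_distrib]
          simp [add_comm]
        · rw [Matrix.updateRow_ne hi]
          simp only [partSum, Matrix.of_apply]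
          have hne : (i : ℕ) ≠ t + 1 := by
            intro hh; exact hi (Fin.ext (by simpa using hh))
          refine if_congr (by omega) rfl rfl
      rw [key]
      exact isTP_rowop ih ⟨t+1, h⟩ ⟨t, by omega⟩ rfl
    · have key : partSum X (t + 1) = partSum X t := by
        ext i j
        simp only [partSum, Matrix.of_apply]
        have hi := i.isLt
        rw [if_pos (by omega), if_pos (by omega)]
      rw [key]; exact ih

lemma isTP_sumRows {n : ℕ} {X : Matrix (Fin n) (Fin n) ℝ} (hX : IsTP X) :
    IsTP (sumRows X) := by
  have : sumRows X = partSum X n := by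
    ext i j
    simp only [sumRows, partSum, Matrix.of_apply]
    rw [if_pos (le_of_lt i.isLt)]
  rw [this]
  exact isTP_partSum hX n

/-- Embed a matrix as the lower-right block of a matrix with a 1 in the corner. -/
noncomputable def oneEmb {n : ℕ} (X : Matrix (Fin n) (Fin n) ℝ) :
    Matrix (Fin (n+1)) (Fin (n+1)) ℝ :=
  Matrix.of fun i j =>
    if hi : i = 0 then (if j = 0 then (1 : ℝ) else 0)
    else if hj : j = 0 then 0 else X (i.pred hi) (j.pred hj)

lemma oneEmb_zz {n : ℕ} (X : Matrix (Fin n) (Fin n) ℝ) : oneEmb X 0 0 = 1 := by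
  simp [oneEmb]

lemma oneEmb_z_ne {n : ℕ} (X : Matrix (Fin n) (Fin n) ℝ) {j : Fin (n+1)} (hj : j ≠ 0) :
    oneEmb X 0 j = 0 := by
  simp [oneEmb, hj]

lemma oneEmb_ne_z {n : ℕ} (X : Matrix (Fin n) (Fin n) ℝ) {i : Fin (n+1)} (hi : i ≠ 0) :
    oneEmb X i 0 = 0 := by
  simp [oneEmb, hi]

lemma oneEmb_ne_ne {n : ℕ} (X : Matrix (Fin n) (Fin n) ℝ) {i j : Fin (n+1)}
    (hi : i ≠ 0) (hj : j ≠ 0) : oneEmb X i j = X (i.pred hi) (j.pred hj) := by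
  simp [oneEmb, hi, hj]

lemma oneEmb_submatrix {n k : ℕ} (X : Matrix (Fin n) (Fin n) ℝ)
    (r c : Fin k → Fin (n+1)) (hr0 : ∀ i, r i ≠ 0) (hc0 : ∀ j, c j ≠ 0) :
    (oneEmb X).submatrix r c
      = X.submatrix (fun i => (r i).pred (hr0 i)) (fun j => (c j).pred (hc0 j)) := by
  ext i j
  simp only [Matrix.submatrix_apply]
  rw [oneEmb_ne_ne X (hr0 i) (hc0 j)]

lemma isTP_oneEmb {n : ℕ} {X : Matrix (Fin n) (Fin n) ℝ} (hX : IsTP X) :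
    IsTP (oneEmb X) := by
  intro k r c hr hc
  match k with
  | 0 => simp [Matrix.det_isEmpty]
  | (k + 1) =>
    by_cases h0r : r 0 = 0
    · by_cases h0c : c 0 = 0
      · have hr0 : ∀ i : Fin k, r i.succ ≠ 0 := by
          intro i hcon
          have : r 0 < r i.succ := hr (Fin.succ_pos i)
          rw [hcon, h0r] at this
          exact lt_irrefl _ this
        have hc0 : ∀ j : Fin k, c j.succ ≠ 0 := by
          intro j hcon
          have : c 0 < c j.succ := hc (Fin.succ_pos j)
          rw [hcon, h0c] at this
          exact lt_irrefl _ this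
        rw [Matrix.det_succ_column_zero]
        rw [Finset.sum_eq_single 0]
        · have h00 : ((oneEmb X).submatrix r c) 0 0 = 1 := by
            rw [Matrix.submatrix_apply, h0r, h0c, oneEmb_zz]
          rw [h00]
          have hsub : (((oneEmb X).submatrix r c).submatrix (Fin.succAbove 0) Fin.succ)
              = X.submatrix (fun i => (r i.succ).pred (hr0 i))
                  (fun j => (c j.succ).pred (hc0 j)) := by
            rw [Fin.succAbove_zero, Matrix.submatrix_submatrix]
            exact oneEmb_submatrix X (r ∘ Fin.succ) (c ∘ Fin.succ) hr0 hc0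
          rw [hsub]
          have := hX k _ _
            (Fin.strictMono_pred_comp hr0 (hr.comp Fin.strictMono_succ))
            (Fin.strictMono_pred_comp hc0 (hc.comp Fin.strictMono_succ))
          simpa using this
        · intro b _ hb
          have hrb : r b ≠ 0 := by
            intro hcon
            have : r 0 < r b := hr (Fin.pos_of_ne_zero hb)
            rw [hcon, h0r] at this
            exact lt_irrefl _ this
          have : ((oneEmb X).submatrix r c) b 0 = 0 := by
            rw [Matrix.submatrix_apply, h0c, oneEmb_ne_z X hrb]
          rw [this]; ring
        · intro hcon; exact absurd (Finset.mem_univ _) hcon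
      · refine le_of_eq (Matrix.det_eq_zero_of_row_eq_zero 0 fun j => ?_).symm
        have hcj : c j ≠ 0 := by
          intro hcon
          rcases eq_or_ne j 0 with hj | hj
          · rw [hj] at hcon; exact h0c hcon
          · have : c 0 < c j := hc (Fin.pos_of_ne_zero hj)
            rw [hcon] at this
            exact absurd this (Fin.not_lt_zero _).elim
        rw [Matrix.submatrix_apply, h0r, oneEmb_z_ne X hcj]
    · by_cases h0c : c 0 = 0
      · refine le_of_eq (Matrix.det_eq_zero_of_column_eq_zero 0 fun i => ?_).symm
        have hri : r i ≠ 0 := by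
          intro hcon
          rcases eq_or_ne i 0 with hi | hi
          · rw [hi] at hcon; exact h0r hcon
          · have : r 0 < r i := hr (Fin.pos_of_ne_zero hi)
            rw [hcon] at this
            exact absurd this (Fin.not_lt_zero _).elim
        rw [Matrix.submatrix_apply, h0c, oneEmb_ne_z X hri]
      · have hr0 : ∀ i, r i ≠ 0 := by
          intro i hcon
          rcases eq_or_ne i 0 with hi | hi
          · rw [hi] at hcon; exact h0r hcon
          · have : r 0 < r i := hr (Fin.pos_of_ne_zero hi)
            rw [hcon] at this
            exact absurd this (Fin.not_lt_zero _).elim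
        have hc0 : ∀ j, c j ≠ 0 := by
          intro j hcon
          rcases eq_or_ne j 0 with hj | hj
          · rw [hj] at hcon; exact h0c hcon
          · have : c 0 < c j := hc (Fin.pos_of_ne_zero hj)
            rw [hcon] at this
            exact absurd this (Fin.not_lt_zero _).elim
        rw [oneEmb_submatrix X r c hr0 hc0]
        exact hX _ _ _ (Fin.strictMono_pred_comp hr0 hr) (Fin.strictMono_pred_comp hc0 hc)

/-- The binomial kernel matrix. -/
noncomputable def Jmat (a n : ℕ) : Matrix (Fin n) (Fin n) ℝ :=
  Matrix.of fun i j => ((((i : ℕ) + (j : ℕ) + a).choose (2 * (j : ℕ) + a) : ℕ) : ℝ)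

lemma Jmat_apply (a n : ℕ) (i j : Fin n) :
    Jmat a n i j = ((((i : ℕ) + (j : ℕ) + a).choose (2 * (j : ℕ) + a) : ℕ) : ℝ) := rfl

lemma sum_ite_le {n : ℕ} (i : Fin n) (f : ℕ → ℝ) :
    (∑ s : Fin n, if (s : ℕ) ≤ (i : ℕ) then f (s : ℕ) else 0)
      = ∑ s ∈ Finset.range ((i : ℕ) + 1), f s := by
  rw [Fin.sum_univ_eq_sum_range (fun s => if s ≤ (i : ℕ) then f s else 0) n]
  rw [← Finset.sum_subset (Finset.range_subset_range.mpr (by omega : (i : ℕ) + 1 ≤ n))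
      (fun x _ hx => if_neg (by simp only [Finset.mem_range] at hx; omega))]
  exact Finset.sum_congr rfl fun x hx =>
    if_pos (by simp only [Finset.mem_range] at hx; omega)

lemma hock1 (j : ℕ) : ∀ i, ∑ s ∈ Finset.range i, (s + j).choose (2 * j)
    = (i + j).choose (2 * j + 1)
  | 0 => by simp [Nat.choose_eq_zero_of_lt (by omega : j < 2 * j + 1)]
  | (i + 1) => by
      rw [Finset.sum_range_succ, hock1 j i,
        show i + 1 + j = (i + j) + 1 by omega, Nat.choose_succ_succ]
      simp only [Nat.succ_eq_add_one]
      omega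

lemma hock2 (j : ℕ) : ∀ i, ∑ s ∈ Finset.range i, (s + j + 1).choose (2 * j + 1)
    = (i + j + 1).choose (2 * j + 2)
  | 0 => by simp [Nat.choose_eq_zero_of_lt (by omega : j + 1 < 2 * j + 2)]
  | (i + 1) => by
      rw [Finset.sum_range_succ, hock2 j i,
        show 2 * j + 2 = (2 * j + 1) + 1 by omega]
      conv_rhs => rw [show i + 1 + j + 1 = (i + j + 1) + 1 by omega, Nat.choose_succ_succ]
      simp only [Nat.succ_eq_add_one]
      omega

lemma identA (n : ℕ) : sumRows (Jmat 0 n) = Jmat 1 n := by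
  ext i j
  show (∑ s : Fin n, if (s : ℕ) ≤ (i : ℕ) then Jmat 0 n s j else 0)
      = ((((i : ℕ) + (j : ℕ) + 1).choose (2 * (j : ℕ) + 1) : ℕ) : ℝ)
  simp only [Jmat_apply]
  rw [sum_ite_le i (fun s => ((s + (j : ℕ) + 0).choose (2 * (j : ℕ) + 0) : ℝ))]
  rw [← Nat.cast_sum]
  have : ∑ s ∈ Finset.range ((i : ℕ) + 1), (s + (j : ℕ) + 0).choose (2 * (j : ℕ) + 0)
      = ((i : ℕ) + (j : ℕ) + 1).choose (2 * (j : ℕ) + 1) := by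
    have := hock1 (j : ℕ) ((i : ℕ) + 1)
    simp only [add_zero]
    rw [this]
    congr 1
    omega
  rw [this]

noncomputable def gfun (j s : ℕ) : ℝ :=
  if s = 0 then 0 else ((((s - 1) + (j - 1) + 1).choose (2 * (j - 1) + 1) : ℕ) : ℝ)

lemma identB (n : ℕ) : sumRows (oneEmb (Jmat 1 n)) = Jmat 0 (n + 1) := by
  ext i j
  show (∑ s : Fin (n+1), if (s : ℕ) ≤ (i : ℕ) then oneEmb (Jmat 1 n) s j else 0)
      = ((((i : ℕ) + (j : ℕ) + 0).choose (2 * (j : ℕ) + 0) : ℕ) : ℝ)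
  by_cases hj : j = 0
  · subst hj
    have key : ∀ s : Fin (n+1), (if (s : ℕ) ≤ (i : ℕ) then oneEmb (Jmat 1 n) s 0 else 0)
        = (if s = 0 then (1 : ℝ) else 0) := by
      intro s
      rcases eq_or_ne s 0 with hs | hs
      · subst hs
        rw [if_pos (by simp), if_pos rfl, oneEmb_zz]
      · rw [if_neg hs, oneEmb_ne_z _ hs, ite_self]
    rw [Finset.sum_congr rfl (fun s _ => key s)]
    simp
  · have hjv : 1 ≤ (j : ℕ) := by
      have h := Fin.val_ne_of_ne hj
      simp only [Fin.val_zero] at h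
      omega
    have entry : ∀ s : Fin (n+1), oneEmb (Jmat 1 n) s j = gfun (j : ℕ) (s : ℕ) := by
      intro s
      rcases eq_or_ne s 0 with hs | hs
      · subst hs
        rw [oneEmb_z_ne _ hj]
        simp [gfun]
      · rw [oneEmb_ne_ne _ hs hj]
        simp only [Jmat_apply, Fin.coe_pred]
        have hsv : (s : ℕ) ≠ 0 := by
          have : (s : ℕ) ≠ ((0 : Fin (n+1)) : ℕ) := Fin.val_ne_of_ne hs
          simpa using this
        simp only [gfun]
        rw [if_neg hsv]
    have conv1 : (∑ s : Fin (n+1), if (s : ℕ) ≤ (i : ℕ) then oneEmb (Jmat 1 n) s j else 0)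
        = ∑ s ∈ Finset.range ((i : ℕ) + 1), gfun (j : ℕ) s := by
      rw [← sum_ite_le i (gfun (j : ℕ))]
      exact Finset.sum_congr rfl fun s _ => by rw [entry s]
    rw [conv1, Finset.sum_range_succ']
    have g0 : gfun (j : ℕ) 0 = 0 := by simp [gfun]
    rw [g0, add_zero]
    have step : ∀ s ∈ Finset.range (i : ℕ), gfun (j : ℕ) (s + 1)
        = (((s + ((j : ℕ) - 1) + 1).choose (2 * ((j : ℕ) - 1) + 1) : ℕ) : ℝ) := by
      intro s _
      simp only [gfun]
      rw [if_neg (by omega)]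
      norm_num
    rw [Finset.sum_congr rfl step, ← Nat.cast_sum, hock2 ((j : ℕ) - 1) (i : ℕ)]
    rw [show (i : ℕ) + ((j : ℕ) - 1) + 1 = (i : ℕ) + (j : ℕ) + 0 by omega,
      show 2 * ((j : ℕ) - 1) + 2 = 2 * (j : ℕ) + 0 by omega]

lemma isTP_J0 : ∀ n, IsTP (Jmat 0 n) := by
  intro n
  induction n with
  | zero =>
    intro k r c _ _
    match k with
    | 0 => simp [Matrix.det_isEmpty]
    | (k + 1) => exact (r 0).elim0
  | succ n ih =>
    have h1 : IsTP (Jmat 1 n) := by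
      rw [← identA]; exact isTP_sumRows ih
    rw [← identB]
    exact isTP_sumRows (isTP_oneEmb h1)

lemma besselA_eq (i j : ℕ) :
    besselA (i + 1) (j + 1)
      = (((i + j).choose (2 * j) : ℕ) : ℝ)
        * (((2 * j).factorial : ℝ) / (2 ^ j * (j.factorial : ℝ))) := by
  unfold besselA
  by_cases h : j ≤ i
  · rw [if_pos (by omega)]
    rw [show i + 1 + (j + 1) - 2 = i + j by omega, show i + 1 - (j + 1) = i - j by omega,
      show j + 1 - 1 = j by omega]
    have hch : (((i + j).choose (2 * j) : ℕ) : ℝ)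
        = ((i + j).factorial : ℝ) / (((2 * j).factorial : ℝ) * ((i - j).factorial : ℝ)) := by
      have h2 : 2 * j ≤ i + j := by omega
      rw [Nat.cast_choose ℝ h2, show i + j - 2 * j = i - j by omega]
    rw [hch]
    have f1 : ((2 * j).factorial : ℝ) ≠ 0 := Nat.cast_ne_zero.mpr (Nat.factorial_ne_zero _)
    have f2 : ((i - j).factorial : ℝ) ≠ 0 := Nat.cast_ne_zero.mpr (Nat.factorial_ne_zero _)
    have f3 : ((j).factorial : ℝ) ≠ 0 := Nat.cast_ne_zero.mpr (Nat.factorial_ne_zero _)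
    have f4 : (2 : ℝ) ^ j ≠ 0 := by positivity
    field_simp
  · rw [if_neg (by omega), Nat.choose_eq_zero_of_lt (by omega : i + j < 2 * j)]
    simp

theorem besselA_TP_nonsingular (n : ℕ) :
    let A : Matrix (Fin n) (Fin n) ℝ := fun i j => besselA (i + 1) (j + 1)
    (∀ (k : ℕ) (r c : Fin k → Fin n), StrictMono r → StrictMono c →
        0 ≤ (A.submatrix r c).det) ∧ 0 < A.det := by
  intro A
  have hAeq : ∀ i j : Fin n, A i j = Jmat 0 n i j
      * (((2 * (j : ℕ)).factorial : ℝ) / (2 ^ (j : ℕ) * (((j : ℕ)).factorial : ℝ))) := by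
    intro i j
    show besselA ((i : ℕ) + 1) ((j : ℕ) + 1) = _
    rw [besselA_eq]
    simp only [Jmat, Matrix.of_apply, add_zero]
  constructor
  · intro k r c hr hc
    have hsub : A.submatrix r c = Matrix.of fun a b =>
        (((2 * ((c b : ℕ))).factorial : ℝ) / (2 ^ ((c b : ℕ)) * ((((c b : ℕ))).factorial : ℝ)))
          * ((Jmat 0 n).submatrix r c) a b := by
      ext a b
      simp only [Matrix.submatrix_apply, Matrix.of_apply]
      rw [hAeq (r a) (c b), mul_comm]
    rw [hsub, Matrix.det_mul_row
      (fun b => ((2 * ((c b : ℕ))).factorial : ℝ) / (2 ^ ((c b : ℕ)) * ((((c b : ℕ))).factorial : ℝ)))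
      ((Jmat 0 n).submatrix r c)]
    apply mul_nonneg
    · apply Finset.prod_nonneg
      intro b _
      positivity
    · exact isTP_J0 n k r c hr hc
  · have htri : A.BlockTriangular OrderDual.toDual := by
      intro i j hij
      have hlt : i < j := hij
      show besselA ((i : ℕ) + 1) ((j : ℕ) + 1) = 0
      unfold besselA
      rw [if_neg]
      rw [Fin.lt_def] at hlt
      omega
    rw [Matrix.det_of_lowerTriangular A htri]
    apply Finset.prod_pos
    intro i _
    show 0 < besselA ((i : ℕ) + 1) ((i : ℕ) + 1)
    unfold besselA
    rw [if_pos le_rfl]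
    have h1 : (0:ℝ) < (((i : ℕ) + 1 + ((i : ℕ) + 1) - 2).factorial : ℝ) :=
      Nat.cast_pos.mpr (Nat.factorial_pos _)
    have h2 : (0:ℝ) < 2 ^ ((i : ℕ) + 1 - 1)
        * ((((i : ℕ) + 1 - ((i : ℕ) + 1)).factorial : ℝ))
        * ((((i : ℕ) + 1 - 1).factorial : ℝ)) := by
      have := Nat.factorial_pos ((i : ℕ) + 1 - ((i : ℕ) + 1))
      have := Nat.factorial_pos ((i : ℕ) + 1 - 1)
      positivity
    exact div_pos h1 h2
end
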